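/- Let B : [0,1] → ℝ be continuous with B(0) = 0, and let u, v be B-solutions satisfying the boundary conditions u(0) = 0, u(1) = 1, v(0) = 1, v(1) = 0. Then the constant value α := u'(0)·v(0) − u(0)·v'(0) of the Wronskian u'v − uv' is nonzero. -/
import Mathlib

open MeasureTheory intervalIntegral

private lemma u_eq_zero_aux (B u u' : ℝ → ℝ)
    (hB : ContinuousOn B (Set.Icc 0 1))
    (hderiv : ∀ x ∈ Set.Icc (0:ℝ) 1, HasDerivWithinAt u (u' x) (Set.Icc 0 1) x)
    (hu'c : ContinuousOn u' (Set.Icc 0 1))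
    (heq : ∀ x ∈ Set.Icc (0:ℝ) 1, u' x = u' 0 + u x * B x - ∫ y in (0:ℝ)..x, u' y * B y)
    (hu0 : u 0 = 0) (h0 : u' 0 = 0) : u 1 = 0 := by
  obtain ⟨M, hM⟩ := (isCompact_Icc.image_of_continuousOn hB).isBounded.exists_norm_le
  have hMB : ∀ x ∈ Set.Icc (0:ℝ) 1, |B x| ≤ M := fun x hx =>
    hM _ (Set.mem_image_of_mem B hx)
  have hM0 : (0:ℝ) ≤ M := le_trans (abs_nonneg _) (hMB 0 ⟨le_rfl, zero_le_one⟩)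
  -- projection and continuous extension of |u'|
  set p : ℝ → ℝ := fun y => max 0 (min 1 y) with hp
  have hpmem : ∀ y, p y ∈ Set.Icc (0:ℝ) 1 :=
    fun y => ⟨le_max_left _ _, max_le zero_le_one (min_le_left _ _)⟩
  have hpc : Continuous p := continuous_const.max (continuous_const.min continuous_id)
  have hpid : ∀ y ∈ Set.Icc (0:ℝ) 1, p y = y := by
    intro y hy; simp only [hp]; rw [min_eq_right hy.2, max_eq_right hy.1]
  set w : ℝ → ℝ := fun y => |u' (p y)| with hw
  have hwc : Continuous w := (continuous_abs.comp_continuousOn hu'c).comp_continuous hpc hpmem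
  have hweq : ∀ y ∈ Set.Icc (0:ℝ) 1, w y = |u' y| := by
    intro y hy; simp only [hw, hpid y hy]
  have hwnn : ∀ y, 0 ≤ w y := fun y => abs_nonneg _
  set h : ℝ → ℝ := fun x => ∫ t in (0:ℝ)..x, w t with hh
  have hhd : ∀ x : ℝ, HasDerivAt h (w x) x := fun x =>
    integral_hasDerivAt_right (hwc.intervalIntegrable 0 x)
      hwc.aestronglyMeasurable.stronglyMeasurableAtFilter hwc.continuousAt
  have hhnn : ∀ x ∈ Set.Icc (0:ℝ) 1, 0 ≤ h x := by
    intro x hx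
    exact intervalIntegral.integral_nonneg hx.1 (fun y _ => hwnn y)
  -- integrability helpers
  have hsub : ∀ x ∈ Set.Icc (0:ℝ) 1, Set.uIcc (0:ℝ) x ⊆ Set.Icc 0 1 := by
    intro x hx
    rw [Set.uIcc_of_le hx.1]
    exact Set.Icc_subset_Icc le_rfl hx.2
  have hintu' : ∀ x ∈ Set.Icc (0:ℝ) 1, IntervalIntegrable u' volume 0 x := by
    intro x hx
    exact (hu'c.mono (hsub x hx)).intervalIntegrable
  have hintu'B : ∀ x ∈ Set.Icc (0:ℝ) 1,
      IntervalIntegrable (fun y => u' y * B y) volume 0 x := by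
    intro x hx
    exact ((hu'c.mul hB).mono (hsub x hx)).intervalIntegrable
  -- FTC for u
  have hucont : ContinuousOn u (Set.Icc 0 1) := fun x hx => (hderiv x hx).continuousWithinAt
  have hFTC : ∀ x ∈ Set.Icc (0:ℝ) 1, u x = ∫ y in (0:ℝ)..x, u' y := by
    intro x hx
    have := intervalIntegral.integral_eq_sub_of_hasDeriv_right_of_le hx.1
      (hucont.mono (Set.Icc_subset_Icc le_rfl hx.2))
      (fun t ht => by
        have hmem : t ∈ Set.Icc (0:ℝ) 1 := ⟨le_of_lt ht.1, le_trans (le_of_lt ht.2) hx.2⟩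
        have hnhds : Set.Icc (0:ℝ) 1 ∈ nhds t :=
          Icc_mem_nhds ht.1 (lt_of_lt_of_le ht.2 hx.2)
        exact ((hderiv t hmem).hasDerivAt hnhds).hasDerivWithinAt)
      (hintu' x hx)
    rw [this, hu0, sub_zero]
  -- |u x| ≤ h x
  have huh : ∀ x ∈ Set.Icc (0:ℝ) 1, |u x| ≤ h x := by
    intro x hx
    rw [hFTC x hx]
    calc |∫ y in (0:ℝ)..x, u' y| ≤ ∫ y in (0:ℝ)..x, |u' y| :=
          intervalIntegral.abs_integral_le_integral_abs hx.1
      _ = h x := by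
          refine intervalIntegral.integral_congr ?_
          intro y hy
          exact (hweq y (hsub x hx hy)).symm
  -- |u' x| ≤ 2M h x
  have hu'h : ∀ x ∈ Set.Icc (0:ℝ) 1, |u' x| ≤ 2 * M * h x := by
    intro x hx
    have h1 : u' x = u x * B x - ∫ y in (0:ℝ)..x, u' y * B y := by
      rw [heq x hx, h0, zero_add]
    have h2 : |∫ y in (0:ℝ)..x, u' y * B y| ≤ M * h x := by
      calc |∫ y in (0:ℝ)..x, u' y * B y| ≤ ∫ y in (0:ℝ)..x, |u' y * B y| :=
            intervalIntegral.abs_integral_le_integral_abs hx.1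
        _ ≤ ∫ y in (0:ℝ)..x, M * w y := by
            refine intervalIntegral.integral_mono_on hx.1
              ((hintu'B x hx).abs) ((continuous_const.mul hwc).intervalIntegrable 0 x) ?_
            intro y hy
            have hy' : y ∈ Set.Icc (0:ℝ) 1 := hsub x hx (by rw [Set.uIcc_of_le hx.1]; exact hy)
            rw [abs_mul, hweq y hy', mul_comm (|u' y|)]
            exact mul_le_mul_of_nonneg_right (hMB y hy') (abs_nonneg _)
        _ = M * h x := intervalIntegral.integral_const_mul M w
    have h3 : |u x * B x| ≤ M * h x := by
      rw [abs_mul]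
      calc |u x| * |B x| ≤ h x * M :=
            mul_le_mul (huh x hx) (hMB x hx) (abs_nonneg _) (hhnn x hx)
        _ = M * h x := mul_comm _ _
    calc |u' x| ≤ |u x * B x| + |∫ y in (0:ℝ)..x, u' y * B y| := by
          rw [h1]; exact abs_sub _ _
      _ ≤ M * h x + M * h x := add_le_add h3 h2
      _ = 2 * M * h x := by ring
  -- Gronwall
  have hgron : ∀ x ∈ Set.Icc (0:ℝ) 1, ‖h x‖ ≤ gronwallBound 0 (2*M) 0 (x - 0) := by
    refine norm_le_gronwallBound_of_norm_deriv_right_le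
      (fun x _ => (hhd x).continuousAt.continuousWithinAt)
      (fun x _ => (hhd x).hasDerivWithinAt) ?_ ?_
    · simp [hh]
    · intro x hx
      have hx' : x ∈ Set.Icc (0:ℝ) 1 := ⟨hx.1, le_of_lt hx.2⟩
      rw [Real.norm_eq_abs, Real.norm_eq_abs, abs_of_nonneg (hhnn x hx'), add_zero]
      rw [abs_of_nonneg (hwnn x), hweq x hx']
      exact hu'h x hx'
  have hh1 : h 1 = 0 := by
    have h1 := hgron 1 ⟨zero_le_one, le_rfl⟩
    rw [gronwallBound_ε0_δ0, Real.norm_eq_abs, abs_of_nonneg (hhnn 1 ⟨zero_le_one, le_rfl⟩)] at h1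
    exact le_antisymm (by simpa using h1) (hhnn 1 ⟨zero_le_one, le_rfl⟩)
  have := huh 1 ⟨zero_le_one, le_rfl⟩
  rw [hh1] at this
  exact abs_eq_zero.mp (le_antisymm this (abs_nonneg _))


/-- `u` is a pathwise (`B`-)solution of the homogeneous equation `-u'' + B'·u = 0`:
`u` is continuously differentiable on `[0,1]` with derivative `u'`, and
`u'(x) = u'(0) + u(x)·B(x) - ∫_0^x u'(y)·B(y) dy` for all `x ∈ [0,1]`. -/
def IsBSolution (B u u' : ℝ → ℝ) : Prop :=
  (∀ x ∈ Set.Icc (0:ℝ) 1, HasDerivWithinAt u (u' x) (Set.Icc 0 1) x) ∧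
  ContinuousOn u' (Set.Icc 0 1) ∧
  ∀ x ∈ Set.Icc (0:ℝ) 1, u' x = u' 0 + u x * B x - ∫ y in (0:ℝ)..x, u' y * B y

/-- For B-solutions with the boundary conditions u(0)=0, u(1)=1, v(0)=1, v(1)=0,
the constant value of the Wronskian is nonzero. -/
theorem wronskian_ne_zero (B u u' v v' : ℝ → ℝ)
    (hB : ContinuousOn B (Set.Icc 0 1)) (hB0 : B 0 = 0)
    (hu : IsBSolution B u u') (hv : IsBSolution B v v')
    (hu0 : u 0 = 0) (hu1 : u 1 = 1) (hv0 : v 0 = 1) (hv1 : v 1 = 0) :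
    u' 0 * v 0 - u 0 * v' 0 ≠ 0 := by
  intro hα
  rw [hu0, hv0, mul_one, zero_mul, sub_zero] at hα
  have := u_eq_zero_aux B u u' hB hu.1 hu.2.1 hu.2.2 hu0 hα
  rw [hu1] at this
  exact one_ne_zero this
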